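/- Let t ≥ 2 be an integer, let α > 0 be a real number, let k be a positive integer, and let G be a simple graph with Δ(G) ≥ α. Let s_1, …, s_{t−1} ≥ 1 be real numbers, let 1 ≤ ℓ ≤ t, let J ⊆ [k], and fix vertices u_j ∈ V(G) for each j ∈ J. Then for any fixed vertices y_1, …, y_t of the k-th tensor power G^k, the number of (s_1, …, s_{t−1})-good t-ladders in G^k of the form (x_1, y_1, x_2, y_2, …, x_t, y_t) satisfying x_ℓ(j) = u_j for all j ∈ J is at most Δ(G)^k · (∏_{i=1}^{t−1} s_i) · α^{−|J|}. -/

import Mathlib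

open SimpleGraph Finset

/-- The codegree of `u` and `v` in `H`: the number of common neighbours. -/
noncomputable def codeg {V : Type*} (H : SimpleGraph V) (u v : V) : ℕ :=
  (H.neighborSet u ∩ H.neighborSet v).ncard

/-- The `k`-th tensor power of `G`: vertices are `k`-tuples of vertices of `G`,
with two tuples adjacent iff they are adjacent in `G` in every coordinate. -/
def tensorPow {V : Type*} (G : SimpleGraph V) (k : ℕ) : SimpleGraph (Fin k → V) where
  Adj x y := x ≠ y ∧ ∀ j, G.Adj (x j) (y j)
  symm := ⟨fun x y h => ⟨h.1.symm, fun j => (h.2 j).symm⟩⟩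
  loopless := ⟨fun x h => h.1 rfl⟩

/-- A `t`-ladder in `H` (vertices indexed from `0` to `t-1`):
`x_i x_{i+1}`, `y_i y_{i+1}` are edges for `i < t-1`, and `x_i y_i` is an
edge for all `i`. -/
def IsLadder {W : Type*} (H : SimpleGraph W) (t : ℕ) (x y : Fin t → W) : Prop :=
  (∀ i : Fin t, H.Adj (x i) (y i)) ∧
  ∀ (i : Fin t) (h : (i : ℕ) + 1 < t),
    H.Adj (x i) (x ⟨(i : ℕ) + 1, h⟩) ∧ H.Adj (y i) (y ⟨(i : ℕ) + 1, h⟩)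

/-- An `(s_0, …, s_{t-2})`-good `t`-ladder in `G^k` (with respect to the
parameter `α`): a `t`-ladder `(x_0, y_0, …, x_{t-1}, y_{t-1})` in `G^k` such
that for each `i < t-1` the codegree of `x_{i+1}` and `y_i` in `G^k` is at most
`s i`, for each `i < t-1` and each coordinate `j` the codegree of `x_{i+1}(j)`
and `y_i(j)` in `G` is at least `α`, and in each coordinate `j` the `2t`
vertices `x_0(j), …, x_{t-1}(j), y_0(j), …, y_{t-1}(j)` are pairwise distinct. -/
def IsGoodLadder {V : Type*} (G : SimpleGraph V) (k t : ℕ) (α : ℝ) (s : ℕ → ℝ)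
    (x y : Fin t → (Fin k → V)) : Prop :=
  IsLadder (tensorPow G k) t x y ∧
  (∀ (i : Fin t) (h : (i : ℕ) + 1 < t),
    (codeg (tensorPow G k) (x ⟨(i : ℕ) + 1, h⟩) (y i) : ℝ) ≤ s i ∧
    ∀ j : Fin k, α ≤ (codeg G (x ⟨(i : ℕ) + 1, h⟩ j) (y i j) : ℝ)) ∧
  ∀ j : Fin k,
    Function.Injective (fun p : Fin t × Bool => if p.2 then x p.1 j else y p.1 j)

lemma codeg_eq_card {V : Type*} [Fintype V] (G : SimpleGraph V) [DecidableRel G.Adj] (a b : V) :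
    codeg G a b = (univ.filter (fun z => G.Adj a z ∧ G.Adj b z)).card := by
  rw [codeg, ← Set.ncard_coe_finset]
  congr 1
  ext z
  simp

lemma prod_codeg_le_codeg_tensor {V : Type*} [Fintype V] (G : SimpleGraph V) [DecidableRel G.Adj]
    {k : ℕ} (hk : 0 < k) (a b : Fin k → V) :
    ∏ j, codeg G (a j) (b j) ≤ codeg (tensorPow G k) a b := by
  classical
  rw [codeg_eq_card]
  simp_rw [codeg_eq_card]
  rw [← Fintype.card_piFinset (fun j => univ.filter (fun z => G.Adj (a j) z ∧ G.Adj (b j) z))]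
  apply Finset.card_le_card_of_injOn id ?_ (fun _ _ _ _ h => h)
  intro z hz
  simp only [Finset.mem_coe, id_eq, Fintype.mem_piFinset, mem_filter, mem_univ, true_and] at hz ⊢
  have h1 : ∀ j, G.Adj (a j) (z j) := fun j => (hz j).1
  have h2 : ∀ j, G.Adj (b j) (z j) := fun j => (hz j).2
  exact ⟨⟨fun h => (h1 ⟨0, hk⟩).ne (congrFun h ⟨0, hk⟩), h1⟩,
    ⟨fun h => (h2 ⟨0, hk⟩).ne (congrFun h ⟨0, hk⟩), h2⟩⟩

/-- Lemma 2.5(b): for fixed `y_0, …, y_{t-1}` in `G^k`, `ℓ`, `J ⊆ [k]` and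
fixed vertices `u j` for `j ∈ J`, the number of good `t`-ladders
`(x_0, y_0, …, x_{t-1}, y_{t-1})` with `x_ℓ(j) = u j` for all `j ∈ J` is at
most `Δ(G)^k · (∏ s_i) · α^{-|J|}`. -/
theorem few_bad_ladders_b (t : ℕ) (ht : 2 ≤ t) (α : ℝ) (hα : 0 < α)
    (k : ℕ) (hk : 0 < k) (V : Type) [Fintype V] (G : SimpleGraph V)
    [DecidableRel G.Adj] (hΔ : α ≤ (G.maxDegree : ℝ))
    (s : ℕ → ℝ) (hs : ∀ i, i < t - 1 → 1 ≤ s i)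
    (ℓ : Fin t) (J : Finset (Fin k)) (u : Fin k → V)
    (y : Fin t → (Fin k → V)) :
    (Nat.card {x : Fin t → (Fin k → V) //
        IsGoodLadder G k t α s x y ∧ ∀ j ∈ J, x ℓ j = u j} : ℝ) ≤
      (G.maxDegree : ℝ) ^ k * (∏ i ∈ range (t - 1), s i) * α ^ (-(J.card : ℤ)) := by
  classical
  have ht0 : 0 < t := by omega
  set c : ℝ := α ^ (-(J.card : ℤ)) with hc
  have hcpos : 0 < c := by rw [hc]; positivity
  have hcinv : c = ((α ^ J.card : ℝ))⁻¹ := by rw [hc, zpow_neg, zpow_natCast]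
  have hαpow : (0:ℝ) < α ^ J.card := by positivity
  have hJk : J.card ≤ k := by simpa using Finset.card_le_card (Finset.subset_univ J)
  have hΔpos : (0:ℝ) < (G.maxDegree : ℝ) := lt_of_lt_of_le hα hΔ
  set S : Finset (Fin t → (Fin k → V)) :=
    univ.filter (fun x => IsGoodLadder G k t α s x y ∧ ∀ j ∈ J, x ℓ j = u j) with hSdef
  have hcard : (Nat.card {x : Fin t → (Fin k → V) //
      IsGoodLadder G k t α s x y ∧ ∀ j ∈ J, x ℓ j = u j}) = S.card := by
    rw [Nat.card_eq_fintype_card, hSdef, Fintype.card_subtype]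
  rw [hcard]
  clear hcard
  set b : ℕ → ℝ := fun i =>
    (if i = t - 1 then ((G.maxDegree : ℝ)) ^ k else s i) *
      (if i = ℓ.val then c else 1) with hb
  have hb_nonneg : ∀ i, i < t → 0 ≤ b i := by
    intro i hi
    rw [hb]
    apply mul_nonneg
    · split
      · positivity
      · rename_i h; linarith [hs i (by omega)]
    · split
      · exact hcpos.le
      · norm_num
  set g : (m : ℕ) → (Fin t → (Fin k → V)) → (Fin m → (Fin k → V)) :=
    fun m x r => x ⟨(t - m + r.val) % t, Nat.mod_lt _ ht0⟩ with hg
  have hidx : ∀ (m : ℕ), m ≤ t → ∀ (r : ℕ), r < m → (t - m + r) % t = t - m + r := by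
    intro m hm r hr
    exact Nat.mod_eq_of_lt (by omega)
  have key : ∀ m, 1 ≤ m → m ≤ t →
      ((S.image (g m)).card : ℝ) ≤ ∏ i ∈ Finset.Ico (t - m) t, b i := by
    intro m
    induction m with
    | zero => omega
    | succ m ih =>
      intro _ hmt
      rcases Nat.eq_zero_or_pos m with hm0 | hm1
      · -- base case m + 1 = 1
        subst hm0
        have hprodbase : ∏ i ∈ Finset.Ico (t - 1) t, b i = b (t - 1) := by
          rw [Finset.prod_eq_prod_Ico_succ_bot (show t - 1 < t by omega)]
          rw [show t - 1 + 1 = t by omega, Finset.Ico_self, Finset.prod_empty, mul_one]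
        rw [hprodbase]
        set C1 : Finset (Fin k → V) := Fintype.piFinset (fun j =>
          if ℓ.val = t - 1 ∧ j ∈ J then {u j}
          else univ.filter (fun v => G.Adj (y ⟨t - 1, by omega⟩ j) v)) with hC1
        have hmaps : ∀ w ∈ S.image (g 1), w 0 ∈ C1 := by
          intro w hw
          obtain ⟨x, hxS, rfl⟩ := Finset.mem_image.mp hw
          obtain ⟨hgood, hu⟩ := (Finset.mem_filter.mp hxS).2
          have hidx1 : g 1 x 0 = x ⟨t - 1, by omega⟩ := by
            show x _ = x _
            apply congrArg
            apply Fin.ext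
            simp only [Fin.val_zero]
            rw [hidx 1 (by omega) 0 (by omega)]
            omega
          rw [hidx1, hC1, Fintype.mem_piFinset]
          intro j
          split
          · rename_i hcond
            have hlt : (⟨t - 1, by omega⟩ : Fin t) = ℓ := Fin.ext (by simp [hcond.1.symm])
            rw [hlt, Finset.mem_singleton]
            exact hu j hcond.2
          · have hadj := hgood.1.1 ⟨t - 1, by omega⟩
            simp only [mem_filter, mem_univ, true_and]
            exact (And.right hadj j).symm
        have hinj : Set.InjOn (fun w : Fin 1 → Fin k → V => w 0) ↑(S.image (g 1)) := by
          intro w _ w' _ h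
          funext r
          have hr : r = 0 := Subsingleton.elim r 0
          rw [hr]; exact h
        have hcardle : (S.image (g 1)).card ≤ C1.card :=
          Finset.card_le_card_of_injOn (fun w => w 0) hmaps hinj
        have hC1card : (C1.card : ℝ) ≤ b (t - 1) := by
          rw [hC1, Fintype.card_piFinset]
          push_cast
          have hbd : ∀ j : Fin k,
              (((if ℓ.val = t - 1 ∧ j ∈ J then ({u j} : Finset V)
                else univ.filter (fun v => G.Adj (y ⟨t - 1, by omega⟩ j) v)).card : ℝ))
              ≤ (if ℓ.val = t - 1 ∧ j ∈ J then 1 else (G.maxDegree : ℝ)) := by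
            intro j
            split
            · simp
            · have hdeg : (univ.filter (fun v => G.Adj (y ⟨t - 1, by omega⟩ j) v)).card
                  = G.degree (y ⟨t - 1, by omega⟩ j) := by
                rw [SimpleGraph.degree]
                congr 1
                ext v
                simp
              rw [hdeg]
              exact_mod_cast G.degree_le_maxDegree _
          have h1 : ∏ j : Fin k,
              (((if ℓ.val = t - 1 ∧ j ∈ J then ({u j} : Finset V)
                else univ.filter (fun v => G.Adj (y ⟨t - 1, by omega⟩ j) v)).card : ℝ))
              ≤ ∏ j : Fin k, (if ℓ.val = t - 1 ∧ j ∈ J then (1:ℝ) else (G.maxDegree : ℝ)) :=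
            Finset.prod_le_prod (fun j _ => by positivity) (fun j _ => hbd j)
          refine le_trans h1 ?_
          by_cases hl : ℓ.val = t - 1
          · have heq : ∀ j : Fin k, (if ℓ.val = t - 1 ∧ j ∈ J then (1:ℝ) else (G.maxDegree : ℝ))
                = (if j ∈ J then (1:ℝ) else (G.maxDegree : ℝ)) := by
              intro j
              by_cases hj : j ∈ J <;> simp [hl, hj]
            rw [Finset.prod_congr rfl (fun j _ => heq j), Finset.prod_ite, Finset.prod_const,
              Finset.prod_const, one_pow, one_mul]
            have hfcard : (univ.filter (fun j => ¬ j ∈ J)).card = k - J.card := by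
              have hcompl : (univ.filter (fun j => ¬ j ∈ J)) = Jᶜ := by
                ext j; simp
              rw [hcompl, Finset.card_compl, Fintype.card_fin]
            have hbval : b (t - 1) = ((G.maxDegree : ℝ)) ^ k * c := by
              simp only [hb, eq_self_iff_true, if_true]
              rw [if_pos hl.symm]
            rw [hfcard, hbval, hcinv, ← div_eq_mul_inv, le_div_iff₀ hαpow]
            calc (G.maxDegree : ℝ) ^ (k - J.card) * α ^ J.card
                ≤ (G.maxDegree : ℝ) ^ (k - J.card) * (G.maxDegree : ℝ) ^ J.card := by
                  exact mul_le_mul_of_nonneg_left (pow_le_pow_left₀ hα.le hΔ _) (by positivity)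
              _ = (G.maxDegree : ℝ) ^ k := by rw [← pow_add]; congr 1; omega
          · have heq : ∀ j : Fin k, (if ℓ.val = t - 1 ∧ j ∈ J then (1:ℝ) else (G.maxDegree : ℝ))
                = (G.maxDegree : ℝ) := by
              intro j
              rw [if_neg (by tauto)]
            have hbval : b (t - 1) = ((G.maxDegree : ℝ)) ^ k := by
              simp only [hb, eq_self_iff_true, if_true]
              rw [if_neg (fun h => hl h.symm), mul_one]
            rw [Finset.prod_congr rfl (fun j _ => heq j), Finset.prod_const, Finset.card_univ,
              Fintype.card_fin, hbval]
        calc ((S.image (g 1)).card : ℝ) ≤ (C1.card : ℝ) := by exact_mod_cast hcardle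
          _ ≤ b (t - 1) := hC1card
      · -- inductive step
        set i : ℕ := t - (m + 1) with hidef
        have hi1 : i < t := by omega
        have hi2 : i + 1 < t := by omega
        have hint : i ≠ t - 1 := by omega
        set proj : (Fin (m + 1) → (Fin k → V)) → (Fin m → (Fin k → V)) :=
          fun w r => w r.succ with hproj
        have him : S.image (g m) = (S.image (g (m + 1))).image proj := by
          rw [Finset.image_image]
          apply Finset.image_congr
          intro x _
          funext r
          show x _ = x _
          apply congrArg
          apply Fin.ext
          simp only [Fin.val_succ]
          rw [hidx m (by omega) r.val r.isLt, hidx (m + 1) hmt (r.val + 1) (by omega)]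
          omega
        have hstep : (S.image (g (m + 1))).card
            ≤ ⌊b i⌋₊ * ((S.image (g (m + 1))).image proj).card := by
          apply Finset.card_le_mul_card_image
          intro z hz
          obtain ⟨w0, hw0, hzw⟩ := Finset.mem_image.mp hz
          obtain ⟨x0, hx0, hwx⟩ := Finset.mem_image.mp hw0
          have hx0good := (Finset.mem_filter.mp hx0).2.1
          obtain ⟨hcod, hαcod⟩ := hx0good.2.1 ⟨i, hi1⟩ hi2
          set C2 : Finset (Fin k → V) := Fintype.piFinset (fun j =>
            if i = ℓ.val ∧ j ∈ J then {u j}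
            else univ.filter (fun v => G.Adj (x0 ⟨i + 1, hi2⟩ j) v ∧ G.Adj (y ⟨i, hi1⟩ j) v))
            with hC2
          have hmaps : ∀ w ∈ (S.image (g (m + 1))).filter (fun w => proj w = z), w 0 ∈ C2 := by
            intro w hw
            obtain ⟨hwim, hwz⟩ := Finset.mem_filter.mp hw
            obtain ⟨x, hxS, hwx'⟩ := Finset.mem_image.mp hwim
            obtain ⟨hxgood, hxu⟩ := (Finset.mem_filter.mp hxS).2
            have hw0 : w 0 = x ⟨i, hi1⟩ := by
              rw [← hwx']
              show x _ = x _
              apply congrArg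
              apply Fin.ext
              simp only [Fin.val_zero]
              rw [hidx (m + 1) hmt 0 (by omega)]
              omega
            have hw1 : x ⟨i + 1, hi2⟩ = x0 ⟨i + 1, hi2⟩ := by
              have h0 : proj w ⟨0, hm1⟩ = proj w0 ⟨0, hm1⟩ := by
                rw [hwz, hzw]
              rw [← hwx', ← hwx] at h0
              have h0' : x ⟨i + 1, hi2⟩ = proj (g (m + 1) x) ⟨0, hm1⟩ := by
                show x _ = x _
                apply congrArg
                apply Fin.ext
                simp only [Fin.val_succ, Fin.val_mk]
                rw [hidx (m + 1) hmt (0 + 1) (by omega)]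
              have h0'' : proj (g (m + 1) x0) ⟨0, hm1⟩ = x0 ⟨i + 1, hi2⟩ := by
                show x0 _ = x0 _
                apply congrArg
                apply Fin.ext
                simp only [Fin.val_succ, Fin.val_mk]
                rw [hidx (m + 1) hmt (0 + 1) (by omega)]
              rw [h0', h0, h0'']
            rw [hw0, hC2, Fintype.mem_piFinset]
            intro j
            split
            · rename_i hcond
              have hle : (⟨i, hi1⟩ : Fin t) = ℓ := Fin.ext (by simp [hcond.1])
              rw [hle, Finset.mem_singleton]
              exact hxu j hcond.2
            · have hladx := (hxgood.1.2 ⟨i, hi1⟩ hi2).1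
              have hlady := hxgood.1.1 ⟨i, hi1⟩
              simp only [mem_filter, mem_univ, true_and]
              rw [← hw1]
              exact ⟨(And.right hladx j).symm, (And.right hlady j).symm⟩
          have hinj : Set.InjOn (fun w : Fin (m + 1) → Fin k → V => w 0)
              ↑((S.image (g (m + 1))).filter (fun w => proj w = z)) := by
            intro w hw w' hw' h
            rw [Finset.mem_coe, Finset.mem_filter] at hw hw'
            funext r
            rcases Fin.eq_zero_or_eq_succ r with rfl | ⟨q, rfl⟩
            · exact h
            · have hww' : proj w = proj w' := by rw [hw.2, hw'.2]
              simpa [hproj] using congrFun hww' q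
          have hcardle : ((S.image (g (m + 1))).filter (fun w => proj w = z)).card ≤ C2.card :=
            Finset.card_le_card_of_injOn (fun w => w 0) hmaps hinj
          refine le_trans hcardle (Nat.le_floor ?_)
          rw [hC2, Fintype.card_piFinset]
          push_cast
          have hdnn : ∀ j : Fin k, (0:ℝ) ≤ (codeg G (x0 ⟨i + 1, hi2⟩ j) (y ⟨i, hi1⟩ j) : ℝ) :=
            fun j => by positivity
          have hprodcod : ∏ j : Fin k,
              ((codeg G (x0 ⟨i + 1, hi2⟩ j) (y ⟨i, hi1⟩ j) : ℝ)) ≤ s i := by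
            refine le_trans ?_ hcod
            exact_mod_cast Nat.cast_le.mpr (prod_codeg_le_codeg_tensor G hk _ _)
          have hcodcard : ∀ j : Fin k,
              ((univ.filter (fun v => G.Adj (x0 ⟨i + 1, hi2⟩ j) v ∧ G.Adj (y ⟨i, hi1⟩ j) v)).card : ℝ)
              = (codeg G (x0 ⟨i + 1, hi2⟩ j) (y ⟨i, hi1⟩ j) : ℝ) := by
            intro j
            rw [codeg_eq_card]
          by_cases hil : i = ℓ.val
          · have hbi : b i = s i * c := by rw [hb]; simp only [if_neg hint, if_pos hil]
            rw [hbi]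
            have heq : ∀ j : Fin k,
                (((if i = ℓ.val ∧ j ∈ J then ({u j} : Finset V)
                  else univ.filter (fun v => G.Adj (x0 ⟨i + 1, hi2⟩ j) v ∧ G.Adj (y ⟨i, hi1⟩ j) v)).card : ℝ))
                = (if j ∈ J then (1:ℝ) else (codeg G (x0 ⟨i + 1, hi2⟩ j) (y ⟨i, hi1⟩ j) : ℝ)) := by
              intro j
              by_cases hj : j ∈ J
              · rw [if_pos ⟨hil, hj⟩, if_pos hj, Finset.card_singleton, Nat.cast_one]
              · rw [if_neg (by tauto), if_neg hj, hcodcard]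
            rw [Finset.prod_congr rfl (fun j _ => heq j)]
            rw [Finset.prod_ite, Finset.prod_const_one, one_mul]
            have hsplit := Finset.prod_filter_mul_prod_filter_not univ (fun j => j ∈ J)
              (fun j => (codeg G (x0 ⟨i + 1, hi2⟩ j) (y ⟨i, hi1⟩ j) : ℝ))
            have hfJ : univ.filter (fun j => j ∈ J) = J := by ext j; simp
            have hαle : α ^ J.card ≤ ∏ j ∈ univ.filter (fun j => j ∈ J),
                (codeg G (x0 ⟨i + 1, hi2⟩ j) (y ⟨i, hi1⟩ j) : ℝ) := by
              rw [hfJ]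
              calc α ^ J.card = ∏ _j ∈ J, α := by rw [Finset.prod_const]
                _ ≤ _ := Finset.prod_le_prod (fun _ _ => hα.le) (fun j _ => hαcod j)
            have hX_nonneg : (0:ℝ) ≤ ∏ j ∈ univ.filter (fun j => ¬ j ∈ J),
                (codeg G (x0 ⟨i + 1, hi2⟩ j) (y ⟨i, hi1⟩ j) : ℝ) :=
              Finset.prod_nonneg (fun j _ => hdnn j)
            have hkey : α ^ J.card * ∏ j ∈ univ.filter (fun j => ¬ j ∈ J),
                (codeg G (x0 ⟨i + 1, hi2⟩ j) (y ⟨i, hi1⟩ j) : ℝ) ≤ s i := by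
              calc α ^ J.card * ∏ j ∈ univ.filter (fun j => ¬ j ∈ J),
                  (codeg G (x0 ⟨i + 1, hi2⟩ j) (y ⟨i, hi1⟩ j) : ℝ)
                  ≤ (∏ j ∈ univ.filter (fun j => j ∈ J),
                    (codeg G (x0 ⟨i + 1, hi2⟩ j) (y ⟨i, hi1⟩ j) : ℝ)) *
                    ∏ j ∈ univ.filter (fun j => ¬ j ∈ J),
                    (codeg G (x0 ⟨i + 1, hi2⟩ j) (y ⟨i, hi1⟩ j) : ℝ) :=
                  mul_le_mul_of_nonneg_right hαle hX_nonneg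
                _ = ∏ j : Fin k, (codeg G (x0 ⟨i + 1, hi2⟩ j) (y ⟨i, hi1⟩ j) : ℝ) := hsplit
                _ ≤ s i := hprodcod
            rw [hcinv, ← div_eq_mul_inv, le_div_iff₀ hαpow]
            linarith [hkey]
          · have hbi : b i = s i := by
              rw [hb]; simp only [if_neg hint, if_neg hil, mul_one]
            rw [hbi]
            have heq : ∀ j : Fin k,
                (((if i = ℓ.val ∧ j ∈ J then ({u j} : Finset V)
                  else univ.filter (fun v => G.Adj (x0 ⟨i + 1, hi2⟩ j) v ∧ G.Adj (y ⟨i, hi1⟩ j) v)).card : ℝ))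
                = (codeg G (x0 ⟨i + 1, hi2⟩ j) (y ⟨i, hi1⟩ j) : ℝ) := by
              intro j
              rw [if_neg (by tauto), hcodcard]
            rw [Finset.prod_congr rfl (fun j _ => heq j)]
            exact hprodcod
        have ihm := ih hm1 (by omega)
        rw [← him] at hstep
        calc ((S.image (g (m + 1))).card : ℝ)
            ≤ (⌊b i⌋₊ : ℝ) * ((S.image (g m)).card : ℝ) := by exact_mod_cast hstep
          _ ≤ b i * ∏ i' ∈ Finset.Ico (t - m) t, b i' :=
              mul_le_mul (Nat.floor_le (hb_nonneg i hi1)) ihm (by positivity) (hb_nonneg i hi1)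
          _ = ∏ i' ∈ Finset.Ico (t - (m + 1)) t, b i' := by
              rw [Finset.prod_eq_prod_Ico_succ_bot (show t - (m + 1) < t by omega)]
              rw [show t - (m + 1) + 1 = t - m by omega]
  have hfin := key t (by omega) le_rfl
  have hgt : S.image (g t) = S := by
    have hgid : g t = id := by
      funext x r
      show x _ = x r
      apply congrArg
      apply Fin.ext
      simp [Nat.sub_self, Nat.mod_eq_of_lt r.isLt]
    rw [hgid, Finset.image_id]
  rw [hgt, Nat.sub_self, ← Finset.range_eq_Ico] at hfin
  have h1 : ∏ i' ∈ range ((t-1)+1), (if i' = t - 1 then ((G.maxDegree : ℝ)) ^ k else s i')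
      = (∏ i' ∈ range (t-1), s i') * (G.maxDegree : ℝ) ^ k := by
    rw [Finset.prod_range_succ, if_pos rfl]
    congr 1
    apply Finset.prod_congr rfl
    intro i' hi'
    rw [if_neg (by rw [Finset.mem_range] at hi'; omega)]
  rw [show (t-1)+1 = t by omega] at h1
  have h2 : ∏ i' ∈ range t, (if i' = ℓ.val then c else 1) = c := by
    rw [Finset.prod_ite_eq' (range t) ℓ.val (fun _ => c), if_pos (Finset.mem_range.mpr ℓ.isLt)]
  calc (S.card : ℝ) ≤ ∏ i' ∈ range t, b i' := hfin
    _ = (G.maxDegree : ℝ) ^ k * (∏ i' ∈ range (t - 1), s i') * c := by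
        simp only [hb]
        rw [Finset.prod_mul_distrib, h1, h2]
        ring
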